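/- arXiv:math/0702448 — 2 statements merged into one kernel-verified Lean document; each statement's English description precedes it below -/
import Mathlib

section
/- If Γ and Λ are lattices in ℝ^d related by a non-zero linear similarity, then for every m ∈ ℕ the number of similar sublattices of Γ of index m equals the number of similar sublattices of Λ of index m. -/
open scoped RealInnerProductSpace

noncomputable section

/-- A non-zero linear similarity of ℝ^d: a linear map scaling all inner
products by a constant c > 0. -/
def IsSimilarity {d : ℕ} (S : EuclideanSpace ℝ (Fin d) →ₗ[ℝ] EuclideanSpace ℝ (Fin d)) : Prop :=
  ∃ c : ℝ, 0 < c ∧ ∀ u v : EuclideanSpace ℝ (Fin d), (inner ℝ (S u) (S v) : ℝ) = c * inner ℝ u v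

/-- A lattice in ℝ^d: a free ℤ-module of rank d whose ℝ-span is all of ℝ^d. -/
def IsLattice {d : ℕ} (Γ : AddSubgroup (EuclideanSpace ℝ (Fin d))) : Prop :=
  Nonempty (Module.Basis (Fin d) ℤ (AddSubgroup.toIntSubmodule Γ)) ∧
  Submodule.span ℝ (Γ : Set (EuclideanSpace ℝ (Fin d))) = ⊤

/-- The set of similar sublattices (SSLs) of Γ of index m: sublattices of Γ that
are images of Γ under a (non-zero) linear similarity and have index m in Γ. -/
def SSL {d : ℕ} (Γ : AddSubgroup (EuclideanSpace ℝ (Fin d))) (m : ℕ) :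
    Set (AddSubgroup (EuclideanSpace ℝ (Fin d))) :=
  {Λ | Λ ≤ Γ ∧ Λ.relIndex Γ = m ∧
    ∃ S : EuclideanSpace ℝ (Fin d) →ₗ[ℝ] EuclideanSpace ℝ (Fin d),
      IsSimilarity S ∧ S '' (Γ : Set (EuclideanSpace ℝ (Fin d))) = (Λ : Set (EuclideanSpace ℝ (Fin d)))}

lemma IsSimilarity.injective {d : ℕ}
    {S : EuclideanSpace ℝ (Fin d) →ₗ[ℝ] EuclideanSpace ℝ (Fin d)}
    (hS : IsSimilarity S) : Function.Injective S := by
  obtain ⟨c, hc, h⟩ := hS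
  rw [← LinearMap.ker_eq_bot, LinearMap.ker_eq_bot']
  intro u hu
  have h2 := h u u
  rw [hu, inner_zero_left] at h2
  have h3 : (inner ℝ u u : ℝ) = 0 := by
    rcases mul_eq_zero.mp h2.symm with h' | h'
    · exact absurd h' hc.ne'
    · exact h'
  exact inner_self_eq_zero.mp h3

lemma IsSimilarity.bijective {d : ℕ}
    {S : EuclideanSpace ℝ (Fin d) →ₗ[ℝ] EuclideanSpace ℝ (Fin d)}
    (hS : IsSimilarity S) : Function.Bijective S :=
  ⟨hS.injective, (LinearMap.injective_iff_surjective).mp hS.injective⟩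

lemma IsSimilarity.symm {d : ℕ}
    {S : EuclideanSpace ℝ (Fin d) →ₗ[ℝ] EuclideanSpace ℝ (Fin d)}
    (hS : IsSimilarity S) :
    IsSimilarity ((LinearEquiv.ofBijective S hS.bijective).symm :
      EuclideanSpace ℝ (Fin d) →ₗ[ℝ] EuclideanSpace ℝ (Fin d)) := by
  obtain ⟨c, hc, h⟩ := id hS
  set E := LinearEquiv.ofBijective S hS.bijective with hE
  refine ⟨c⁻¹, by positivity, fun u v => ?_⟩
  have h2 := h (E.symm u) (E.symm v)
  have hu : S (E.symm u) = u := E.apply_symm_apply u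
  have hv : S (E.symm v) = v := E.apply_symm_apply v
  rw [hu, hv] at h2
  rw [h2, inv_mul_cancel_left₀ hc.ne']
  rfl

lemma IsSimilarity.comp {d : ℕ}
    {S T : EuclideanSpace ℝ (Fin d) →ₗ[ℝ] EuclideanSpace ℝ (Fin d)}
    (hS : IsSimilarity S) (hT : IsSimilarity T) : IsSimilarity (S ∘ₗ T) := by
  obtain ⟨c, hc, h⟩ := hS
  obtain ⟨c', hc', h'⟩ := hT
  exact ⟨c * c', by positivity, fun u v => by
    simp only [LinearMap.comp_apply, h, h', mul_assoc]⟩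

lemma mem_SSL_map {d m : ℕ}
    {S : EuclideanSpace ℝ (Fin d) →ₗ[ℝ] EuclideanSpace ℝ (Fin d)}
    (hS : IsSimilarity S)
    {Γ Λ Λ' : AddSubgroup (EuclideanSpace ℝ (Fin d))}
    (hSΓ : S '' (Γ : Set (EuclideanSpace ℝ (Fin d))) = (Λ : Set (EuclideanSpace ℝ (Fin d))))
    (hΛ' : Λ' ∈ SSL Γ m) :
    AddSubgroup.map S.toAddMonoidHom Λ' ∈ SSL Λ m := by
  obtain ⟨hle, hrel, T, hT, hTΓ⟩ := hΛ'
  have hmapΓ : AddSubgroup.map S.toAddMonoidHom Γ = Λ := by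
    apply SetLike.ext'
    simpa using hSΓ
  set E := LinearEquiv.ofBijective S hS.bijective with hE
  have hsymm : ⇑E.symm '' (Λ : Set (EuclideanSpace ℝ (Fin d))) = (Γ : Set (EuclideanSpace ℝ (Fin d))) := by
    rw [← hSΓ, ← Set.image_comp]
    have : (⇑E.symm ∘ ⇑S) = id := by
      funext x
      exact E.symm_apply_apply x
    rw [this, Set.image_id]
  refine ⟨?_, ?_, S ∘ₗ T ∘ₗ (E.symm : EuclideanSpace ℝ (Fin d) →ₗ[ℝ] EuclideanSpace ℝ (Fin d)),
      (hS.comp hT).comp hS.symm, ?_⟩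
  · rw [← hmapΓ]
    exact AddSubgroup.map_le_map_iff_of_injective hS.injective |>.mpr hle
  · rw [← hmapΓ]
    have hcm : (AddSubgroup.map S.toAddMonoidHom Λ').comap S.toAddMonoidHom = Λ' :=
      AddSubgroup.comap_map_eq_self_of_injective hS.injective Λ'
    calc (AddSubgroup.map S.toAddMonoidHom Λ').relIndex (AddSubgroup.map S.toAddMonoidHom Γ)
        = ((AddSubgroup.map S.toAddMonoidHom Λ').comap S.toAddMonoidHom).relIndex Γ :=
          (AddSubgroup.relIndex_comap _ _ _).symm
      _ = m := by rw [hcm]; exact hrel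
  · show (⇑S ∘ ⇑T ∘ ⇑E.symm) '' (Λ : Set (EuclideanSpace ℝ (Fin d))) = _
    rw [Set.image_comp, Set.image_comp, hsymm, hTΓ]
    rfl

/-- similar lattices have the same number of similar sublattices of
each index. -/
theorem card_SSL_eq_of_similar {d : ℕ}
    (Γ Λ : AddSubgroup (EuclideanSpace ℝ (Fin d)))
    (hΓ : IsLattice Γ) (hΛ : IsLattice Λ)
    (h : ∃ S, IsSimilarity S ∧
      S '' (Γ : Set (EuclideanSpace ℝ (Fin d))) = (Λ : Set (EuclideanSpace ℝ (Fin d))))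
    (m : ℕ) :
    Nat.card (SSL Γ m) = Nat.card (SSL Λ m) := by
  obtain ⟨S, hS, hSΓ⟩ := h
  set E := LinearEquiv.ofBijective S hS.bijective with hE
  have hsymm : (⇑E.symm) '' (Λ : Set (EuclideanSpace ℝ (Fin d))) = Γ := by
    rw [← hSΓ, ← Set.image_comp]
    have : (⇑E.symm ∘ ⇑S) = id := by
      funext x; exact E.symm_apply_apply x
    rw [this, Set.image_id]
  have key : SSL Λ m = (AddSubgroup.map S.toAddMonoidHom) '' SSL Γ m := by
    ext Λ''
    constructor
    · intro hΛ''
      refine ⟨AddSubgroup.map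
        ((E.symm : EuclideanSpace ℝ (Fin d) →ₗ[ℝ] EuclideanSpace ℝ (Fin d))).toAddMonoidHom Λ'',
        mem_SSL_map hS.symm hsymm hΛ'', ?_⟩
      apply SetLike.ext'
      simp only [AddSubgroup.coe_map, LinearMap.toAddMonoidHom_coe]
      rw [← Set.image_comp]
      have : (⇑S ∘ ⇑(E.symm : EuclideanSpace ℝ (Fin d) →ₗ[ℝ] EuclideanSpace ℝ (Fin d))) = id := by
        funext x; exact E.apply_symm_apply x
      rw [this, Set.image_id]
    · rintro ⟨Λ', hΛ', rfl⟩
      exact mem_SSL_map hS hSΓ hΛ'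
  rw [key, Nat.card_image_of_injective (AddSubgroup.map_injective hS.injective)]
end
end

section
/- Every non-zero ℝ-linear similarity of ℝ^4 ≅ ℍ(ℝ) is either of the form x ↦ pxq (orientation preserving) or x ↦ p x̄ q (orientation reversing) for non-zero quaternions p, q ∈ ℍ(ℝ); conversely every map of these forms is a linear similarity, with determinant ±|p|⁴|q|⁴. -/
noncomputable section

open Quaternion

/-- A non-zero linear similarity of ℍ(ℝ) ≅ ℝ⁴: a linear map scaling all inner
products by a constant c > 0. -/
def IsSimilarityQ (S : ℍ →ₗ[ℝ] ℍ) : Prop :=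
  ∃ c : ℝ, 0 < c ∧ ∀ u v : ℍ, (inner ℝ (S u) (S v) : ℝ) = c * inner ℝ u v

/-- The linear map x ↦ p·x·q on ℍ(ℝ). -/
def mulLR (p q : ℍ) : ℍ →ₗ[ℝ] ℍ :=
  (LinearMap.mulRight ℝ q).comp (LinearMap.mulLeft ℝ p)

/-- Quaternion conjugation x ↦ x̄ as an ℝ-linear map. -/
def quatConjL : ℍ →ₗ[ℝ] ℍ where
  toFun := star
  map_add' := star_add
  map_smul' := fun r x => by simp

open scoped RealInnerProductSpace

namespace QSim

def qi : ℍ := ⟨0,1,0,0⟩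
def qj : ℍ := ⟨0,0,1,0⟩
def qk : ℍ := ⟨0,0,0,1⟩

@[simp] lemma qi_re : qi.re = 0 := rfl
@[simp] lemma qi_imI : qi.imI = 1 := rfl
@[simp] lemma qi_imJ : qi.imJ = 0 := rfl
@[simp] lemma qi_imK : qi.imK = 0 := rfl
@[simp] lemma qj_re : qj.re = 0 := rfl
@[simp] lemma qj_imI : qj.imI = 0 := rfl
@[simp] lemma qj_imJ : qj.imJ = 1 := rfl
@[simp] lemma qj_imK : qj.imK = 0 := rfl
@[simp] lemma qk_re : qk.re = 0 := rfl
@[simp] lemma qk_imI : qk.imI = 0 := rfl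
@[simp] lemma qk_imJ : qk.imJ = 0 := rfl
@[simp] lemma qk_imK : qk.imK = 1 := rfl

lemma qii : qi * qi = -1 := by ext <;> simp [qi_re, qi_imI, qi_imJ, qi_imK, Quaternion.re_mul, Quaternion.imI_mul, Quaternion.imJ_mul, Quaternion.imK_mul]
lemma qjj : qj * qj = -1 := by ext <;> simp [qj_re, qj_imI, qj_imJ, qj_imK, Quaternion.re_mul, Quaternion.imI_mul, Quaternion.imJ_mul, Quaternion.imK_mul]
lemma qij : qi * qj = qk := by ext <;> simp [qi_re, qi_imI, qi_imJ, qi_imK, qj_re, qj_imI, qj_imJ, qj_imK, qk_re, qk_imI, qk_imJ, qk_imK, Quaternion.re_mul, Quaternion.imI_mul, Quaternion.imJ_mul, Quaternion.imK_mul]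
lemma qji : qj * qi = -qk := by ext <;> simp [qi_re, qi_imI, qi_imJ, qi_imK, qj_re, qj_imI, qj_imJ, qj_imK, qk_re, qk_imI, qk_imJ, qk_imK, Quaternion.re_mul, Quaternion.imI_mul, Quaternion.imJ_mul, Quaternion.imK_mul]
lemma qi_ne : qi ≠ 0 := by simp [qi_re, qi_imI, qi_imJ, qi_imK, Quaternion.ext_iff]
lemma qj_ne : qj ≠ 0 := by simp [qj_re, qj_imI, qj_imJ, qj_imK, Quaternion.ext_iff]

lemma re_mul_comm (a b : ℍ) : (a*b).re = (b*a).re := by simp [Quaternion.re_mul]; ring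

lemma imag_sq {x : ℍ} (h : x.re = 0) (hn : normSq x = 1) : x * x = -1 := by
  have hs : star x = -x := Quaternion.star_eq_neg.2 h
  have h2 := x.self_mul_star
  rw [hs, hn, mul_neg] at h2
  have h3 : x * x = -((1:ℝ):ℍ) := by rw [← h2, neg_neg]
  simpa using h3

lemma imag_anticomm {x y : ℍ} (hx : x.re = 0) (hy : y.re = 0) (hxy : (x*y).re = 0) :
    x * y = -(y * x) := by
  have h1 : star (x*y) = -(x*y) := Quaternion.star_eq_neg.2 hxy
  rw [star_mul, Quaternion.star_eq_neg.2 hx, Quaternion.star_eq_neg.2 hy] at h1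
  rw [neg_mul_neg] at h1
  rw [h1, neg_neg]

lemma inner_lmul (a w z : ℍ) : ⟪a*w, a*z⟫ = normSq a * ⟪w,z⟫ := by
  simp only [inner_def, Quaternion.normSq_def', star_mul, Quaternion.re_mul,
    Quaternion.imI_mul, Quaternion.imJ_mul, Quaternion.imK_mul,
    Quaternion.re_star, Quaternion.imI_star, Quaternion.imJ_star, Quaternion.imK_star]
  ring

lemma inner_rmul (a w z : ℍ) : ⟪w*a, z*a⟫ = normSq a * ⟪w,z⟫ := by
  simp only [inner_def, Quaternion.normSq_def', star_mul, Quaternion.re_mul,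
    Quaternion.imI_mul, Quaternion.imJ_mul, Quaternion.imK_mul,
    Quaternion.re_star, Quaternion.imI_star, Quaternion.imJ_star, Quaternion.imK_star]
  ring

lemma inner_star (w z : ℍ) : ⟪star w, star z⟫ = ⟪w,z⟫ := by
  simp only [inner_def, star_mul, star_star, Quaternion.re_mul,
    Quaternion.re_star, Quaternion.imI_star, Quaternion.imJ_star, Quaternion.imK_star]
  ring

lemma qdecomp (x : ℍ) : x = x.re • (1:ℍ) + x.imI • qi + x.imJ • qj + x.imK • qk := by
  ext <;> simp [qi_re, qi_imI, qi_imJ, qi_imK, qj_re, qj_imI, qj_imJ, qj_imK, qk_re, qk_imI, qk_imJ, qk_imK]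

lemma stepA {I : ℍ} (hI : I.re = 0) (hnI : normSq I = 1) :
    ∃ a : ℍ, a ≠ 0 ∧ a * qi = I * a := by
  have hII := imag_sq hI hnI
  by_cases h : (1:ℍ) - I * qi = 0
  · have h1 : I * qi = 1 := by rwa [sub_eq_zero, eq_comm] at h
    have h2 := congrArg (· * qi) h1
    simp only [one_mul] at h2
    rw [mul_assoc, qii, mul_neg_one] at h2
    have hIq : I = -qi := neg_eq_iff_eq_neg.mp h2
    exact ⟨qj, qj_ne, by rw [hIq, qji, neg_mul, qij]⟩
  · refine ⟨_, h, ?_⟩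
    rw [sub_mul, one_mul, mul_assoc, qii, mul_sub, mul_one, ← mul_assoc, hII]
    noncomm_ring

lemma stepB (J'' : ℍ) (μ : ℝ)
    (h1 : qi * J'' = -(J'' * qi))
    (h2 : J'' * J'' = -((μ^2 : ℝ) : ℍ)) :
    ∃ b : ℍ, b ≠ 0 ∧ b * qi = qi * b ∧ ((μ:ℝ):ℍ) * (b * qj) = J'' * b := by
  by_cases hb : ((μ:ℝ):ℍ) - J'' * qj = 0
  · have h3 : J'' * qj = ((μ:ℝ):ℍ) := (sub_eq_zero.mp hb).symm
    have h4 := congrArg (· * qj) h3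
    rw [mul_assoc, qjj, mul_neg_one] at h4
    have hJq : J'' = -(((μ:ℝ):ℍ) * qj) := (neg_eq_iff_eq_neg.mp h4)
    refine ⟨qi, qi_ne, rfl, ?_⟩
    rw [hJq, qij, neg_mul, mul_assoc, qji, mul_neg, neg_neg]
  · refine ⟨_, hb, ?_, ?_⟩
    · have hq : J'' * qj * qi = qi * (J'' * qj) := by
        calc J'' * qj * qi = J'' * (qj * qi) := mul_assoc _ _ _
          _ = -(J'' * qk) := by rw [qji, mul_neg]
          _ = -((J'' * qi) * qj) := by rw [mul_assoc, qij]
          _ = (-(J'' * qi)) * qj := by rw [neg_mul]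
          _ = (qi * J'') * qj := by rw [← h1]
          _ = qi * (J'' * qj) := mul_assoc _ _ _
      rw [sub_mul, mul_sub, hq, coe_commutes]
    · calc ((μ:ℝ):ℍ) * ((((μ:ℝ):ℍ) - J'' * qj) * qj)
          = ((μ:ℝ):ℍ) * (((μ:ℝ):ℍ) * qj - J'' * (qj * qj)) := by rw [sub_mul, mul_assoc]
        _ = ((μ:ℝ):ℍ) * (((μ:ℝ):ℍ) * qj) + ((μ:ℝ):ℍ) * J'' := by
            rw [qjj, mul_neg_one, sub_neg_eq_add, mul_add]
        _ = ((μ^2 : ℝ):ℍ) * qj + ((μ:ℝ):ℍ) * J'' := by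
            rw [← mul_assoc, ← Quaternion.coe_mul, ← pow_two]
        _ = J'' * (((μ:ℝ):ℍ) - J'' * qj) := by
            rw [mul_sub, ← mul_assoc, h2, neg_mul, sub_neg_eq_add, add_comm, coe_commutes]

lemma key {I J : ℍ} (hI : I.re = 0) (hJ : J.re = 0) (hnI : normSq I = 1) (hnJ : normSq J = 1)
    (hIJ : (I*J).re = 0) : ∃ p : ℍ, p ≠ 0 ∧ p * qi = I * p ∧ p * qj = J * p := by
  obtain ⟨a, ha, hai⟩ := stepA hI hnI
  have hμ0 : normSq a ≠ 0 := by simpa [Quaternion.normSq_eq_zero] using ha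
  have hqs : qi * star a = star a * I := by
    have h := congrArg star hai
    rw [star_mul, star_mul, Quaternion.star_eq_neg.2 (show qi.re = 0 from rfl),
      Quaternion.star_eq_neg.2 hI, neg_mul, mul_neg] at h
    exact neg_injective h
  have hanti : I * J = -(J * I) := imag_anticomm hI hJ hIJ
  have hJJ : J * J = -1 := imag_sq hJ hnJ
  have h1 : qi * (star a * (J * a)) = -((star a * (J * a)) * qi) := by
    calc qi * (star a * (J * a)) = (qi * star a) * (J * a) := (mul_assoc _ _ _).symm
      _ = (star a * I) * (J * a) := by rw [hqs]
      _ = star a * ((I * J) * a) := by rw [mul_assoc, ← mul_assoc I]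
      _ = star a * ((-(J * I)) * a) := by rw [hanti]
      _ = -(star a * (J * (I * a))) := by rw [neg_mul, mul_neg, mul_assoc]
      _ = -(star a * (J * (a * qi))) := by rw [hai]
      _ = -((star a * (J * a)) * qi) := by rw [← mul_assoc J a qi, ← mul_assoc]
  have h2 : (star a * (J * a)) * (star a * (J * a)) = -((normSq a ^ 2 : ℝ) : ℍ) := by
    have c1 : (star a * (J * a)) * (star a * (J * a))
        = star a * (J * ((a * star a) * (J * a))) := by noncomm_ring
    rw [c1, Quaternion.self_mul_star, Quaternion.coe_mul_eq_smul, mul_smul_comm, mul_smul_comm]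
    have c2 : star a * (J * (J * a)) = star a * ((J * J) * a) := by noncomm_ring
    rw [c2, hJJ, neg_one_mul, mul_neg, Quaternion.star_mul_self, smul_neg, Quaternion.smul_coe]
    norm_num [pow_two]
  obtain ⟨b, hb, hbi, hbj⟩ := stepB (star a * (J * a)) (normSq a) h1 h2
  refine ⟨a * b, mul_ne_zero ha hb, ?_, ?_⟩
  · rw [mul_assoc, hbi, ← mul_assoc, hai, mul_assoc]
  · have hc := congrArg (fun x => a * x) hbj
    have hL : a * (((normSq a : ℝ):ℍ) * (b * qj)) = (normSq a : ℝ) • ((a*b) * qj) := by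
      rw [Quaternion.coe_mul_eq_smul, mul_smul_comm, mul_assoc]
    have hR : a * ((star a * (J * a)) * b) = (normSq a : ℝ) • (J * (a*b)) := by
      calc a * ((star a * (J * a)) * b) = (a * star a) * (J * (a * b)) := by noncomm_ring
        _ = (normSq a:ℝ) • (J * (a*b)) := by
            rw [Quaternion.self_mul_star, Quaternion.coe_mul_eq_smul]
    rw [hL, hR] at hc
    exact smul_right_injective ℍ hμ0 hc

lemma mulLR_apply (p q x : ℍ) : mulLR p q x = p * x * q := rfl

lemma conjL_apply (x : ℍ) : quatConjL x = star x := rfl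

lemma normSq_pos {p : ℍ} (hp : p ≠ 0) : 0 < normSq p := by
  rcases lt_or_eq_of_le (Quaternion.normSq_nonneg (a := p)) with h | h
  · exact h
  · exact absurd (Quaternion.normSq_eq_zero.mp h.symm) hp

def bQ : Module.Basis (Fin 4) ℝ ℍ := QuaternionAlgebra.basisOneIJK (-1) 0 (-1)

lemma bQ_repr (x : ℍ) (n : Fin 4) : (bQ.repr x) n = ![x.re, x.imI, x.imJ, x.imK] n := by
  rw [show (bQ.repr x) n = (⇑(bQ.repr x)) n from rfl]
  rw [show ⇑(bQ.repr x) = ⇑((QuaternionAlgebra.basisOneIJK (-1:ℝ) 0 (-1)).repr x) from rfl]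
  exact congrFun (QuaternionAlgebra.coe_basisOneIJK_repr (R := ℝ) (c₁ := -1) (c₂ := 0) (c₃ := -1) x) n

lemma basis_vals : bQ 0 = 1 ∧ bQ 1 = qi ∧ bQ 2 = qj ∧ bQ 3 = qk := by
  refine ⟨?_, ?_, ?_, ?_⟩ <;>
  · apply bQ.repr.injective
    refine Finsupp.ext fun n => ?_
    rw [Module.Basis.repr_self]
    rw [show ((bQ.repr _) n : ℝ) = ![QuaternionAlgebra.re _, QuaternionAlgebra.imI _, QuaternionAlgebra.imJ _, QuaternionAlgebra.imK _] n from bQ_repr _ n]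
    fin_cases n <;> simp [qi_re, qi_imI, qi_imJ, qi_imK, qj_re, qj_imI, qj_imJ, qj_imK, qk_re, qk_imI, qk_imJ, qk_imK, Finsupp.single_apply]

theorem det_fin_four_dummy : True := trivial

theorem det_fin_four (A : Matrix (Fin 4) (Fin 4) ℝ) :
    Matrix.det A =
      A 0 0 * (A 1 1 * (A 2 2 * A 3 3 - A 2 3 * A 3 2) - A 1 2 * (A 2 1 * A 3 3 - A 2 3 * A 3 1) + A 1 3 * (A 2 1 * A 3 2 - A 2 2 * A 3 1))
    - A 0 1 * (A 1 0 * (A 2 2 * A 3 3 - A 2 3 * A 3 2) - A 1 2 * (A 2 0 * A 3 3 - A 2 3 * A 3 0) + A 1 3 * (A 2 0 * A 3 2 - A 2 2 * A 3 0))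
    + A 0 2 * (A 1 0 * (A 2 1 * A 3 3 - A 2 3 * A 3 1) - A 1 1 * (A 2 0 * A 3 3 - A 2 3 * A 3 0) + A 1 3 * (A 2 0 * A 3 1 - A 2 1 * A 3 0))
    - A 0 3 * (A 1 0 * (A 2 1 * A 3 2 - A 2 2 * A 3 1) - A 1 1 * (A 2 0 * A 3 2 - A 2 2 * A 3 0) + A 1 2 * (A 2 0 * A 3 1 - A 2 1 * A 3 0)) := by
  rw [Matrix.det_succ_row_zero]
  simp only [Fin.sum_univ_succ, Matrix.det_fin_three, Matrix.submatrix_apply, Fin.succAbove_zero,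
    Finset.univ_unique, Fin.default_eq_zero, Finset.sum_singleton, Fin.val_zero, Fin.val_succ,
    Fin.zero_succAbove, Fin.succ_zero_eq_one, Fin.succ_one_eq_two, Fin.succ_succAbove_zero,
    Fin.succ_succAbove_one]
  simp only [show (Fin.succ 2 : Fin 4) = 3 by decide, show Fin.succAbove (2:Fin 4) 2 = 3 by decide,
    show Fin.succAbove (1:Fin 4) 2 = 3 by decide, show (Fin.castSucc 2 : Fin 4) = 2 by decide, show Fin.succAbove (3:Fin 4) 2 = 2 by decide]
  ring


lemma detL (p : ℍ) : LinearMap.det (LinearMap.mulLeft ℝ p) = normSq p ^ 2 := by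
  obtain ⟨h0, h1, h2, h3⟩ := basis_vals
  rw [← LinearMap.det_toMatrix bQ, det_fin_four]
  simp only [LinearMap.toMatrix_apply, h0, h1, h2, h3, LinearMap.mulLeft_apply, bQ_repr]
  simp only [Quaternion.re_mul, Quaternion.imI_mul, Quaternion.imJ_mul, Quaternion.imK_mul,
    qi_re, qi_imI, qi_imJ, qi_imK, qj_re, qj_imI, qj_imJ, qj_imK, qk_re, qk_imI, qk_imJ, qk_imK, mul_one, mul_zero, mul_neg, sub_zero, zero_sub, add_zero, zero_add, neg_zero,
    Matrix.cons_val_zero, Matrix.cons_val_one, Matrix.head_cons, Matrix.cons_val_fin_one,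
    Matrix.cons_val_succ, Matrix.cons_val_two, Matrix.cons_val_three, Matrix.tail_cons]
  rw [Quaternion.normSq_def']
  ring

lemma detR (p : ℍ) : LinearMap.det (LinearMap.mulRight ℝ p) = normSq p ^ 2 := by
  obtain ⟨h0, h1, h2, h3⟩ := basis_vals
  rw [← LinearMap.det_toMatrix bQ, det_fin_four]
  simp only [LinearMap.toMatrix_apply, h0, h1, h2, h3, LinearMap.mulRight_apply, bQ_repr]
  simp only [Quaternion.re_mul, Quaternion.imI_mul, Quaternion.imJ_mul, Quaternion.imK_mul,
    qi_re, qi_imI, qi_imJ, qi_imK, qj_re, qj_imI, qj_imJ, qj_imK, qk_re, qk_imI, qk_imJ, qk_imK, mul_one, mul_zero, one_mul, zero_mul, mul_neg, sub_zero, zero_sub, add_zero,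
    zero_add, neg_zero,
    Matrix.cons_val_zero, Matrix.cons_val_one, Matrix.head_cons, Matrix.cons_val_fin_one,
    Matrix.cons_val_succ, Matrix.cons_val_two, Matrix.cons_val_three, Matrix.tail_cons]
  rw [Quaternion.normSq_def']
  ring

lemma star_qi : star qi = -qi := by ext <;> simp [qi_re, qi_imI, qi_imJ, qi_imK]
lemma star_qj : star qj = -qj := by ext <;> simp [qj_re, qj_imI, qj_imJ, qj_imK]
lemma star_qk : star qk = -qk := by ext <;> simp [qk_re, qk_imI, qk_imJ, qk_imK]

lemma detC : LinearMap.det quatConjL = -1 := by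
  obtain ⟨h0, h1, h2, h3⟩ := basis_vals
  rw [← LinearMap.det_toMatrix bQ, det_fin_four]
  simp only [LinearMap.toMatrix_apply, h0, h1, h2, h3, conjL_apply, star_one, star_qi,
    star_qj, star_qk, bQ_repr]
  simp only [qi_re, qi_imI, qi_imJ, qi_imK, qj_re, qj_imI, qj_imJ, qj_imK, qk_re, qk_imI, qk_imJ, qk_imK, Quaternion.re_neg, Quaternion.imI_neg, Quaternion.imJ_neg,
    Quaternion.imK_neg, Quaternion.re_one, Quaternion.imI_one, Quaternion.imJ_one,
    Quaternion.imK_one, neg_zero,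
    Matrix.cons_val_zero, Matrix.cons_val_one, Matrix.head_cons, Matrix.cons_val_fin_one,
    Matrix.cons_val_succ, Matrix.cons_val_two, Matrix.cons_val_three, Matrix.tail_cons]
  norm_num

end QSim

set_option maxHeartbeats 1000000 in
/-- every non-zero linear similarity of ℍ(ℝ) ≅ ℝ⁴ is of the form
x ↦ p x q (orientation preserving) or x ↦ p x̄ q (orientation reversing) with
p, q non-zero quaternions; conversely all such maps are similarities, and their
determinants are |p|⁴|q|⁴ and −|p|⁴|q|⁴ respectively. -/
theorem quaternion_similarities :
    (∀ S : ℍ →ₗ[ℝ] ℍ, IsSimilarityQ S →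
      ∃ p q : ℍ, p ≠ 0 ∧ q ≠ 0 ∧ (S = mulLR p q ∨ S = (mulLR p q).comp quatConjL)) ∧
    (∀ p q : ℍ, p ≠ 0 → q ≠ 0 →
      IsSimilarityQ (mulLR p q) ∧ IsSimilarityQ ((mulLR p q).comp quatConjL) ∧
      LinearMap.det (mulLR p q) = ‖p‖ ^ 4 * ‖q‖ ^ 4 ∧
      LinearMap.det ((mulLR p q).comp quatConjL) = -(‖p‖ ^ 4 * ‖q‖ ^ 4)) := by
  open QSim in
  constructor
  · rintro S ⟨c, hc, hS⟩
    have hp0 : S 1 ≠ 0 := by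
      intro h
      have h1 := hS 1 1
      rw [h] at h1
      simp [inner_def] at h1
      exact hc.ne' h1.symm
    have hnormP : normSq (S 1) = c := by
      have h1 := hS 1 1
      rw [inner_self] at h1
      simpa [inner_def] using h1
    have hV : ∀ u v : ℍ, ⟪(S 1)⁻¹ * S u, (S 1)⁻¹ * S v⟫ = ⟪u, v⟫ := by
      intro u v
      rw [inner_lmul, hS, map_inv₀, hnormP, inv_mul_cancel_left₀ hc.ne']
    set I := (S 1)⁻¹ * S qi with hIdef
    set J := (S 1)⁻¹ * S qj with hJdef
    set K := (S 1)⁻¹ * S qk with hKdef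
    have hV1 : (S 1)⁻¹ * S 1 = 1 := inv_mul_cancel₀ hp0
    have hIre : I.re = 0 := by
      have h := hV qi 1; rw [hV1, ← hIdef] at h
      simpa [inner_def, qi_re, qi_imI, qi_imJ, qi_imK] using h
    have hJre : J.re = 0 := by
      have h := hV qj 1; rw [hV1, ← hJdef] at h
      simpa [inner_def, qj_re, qj_imI, qj_imJ, qj_imK] using h
    have hKre : K.re = 0 := by
      have h := hV qk 1; rw [hV1, ← hKdef] at h
      simpa [inner_def, qk_re, qk_imI, qk_imJ, qk_imK] using h
    have hnI : normSq I = 1 := by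
      have h := hV qi qi; rw [← hIdef, inner_self, inner_self] at h
      simpa [Quaternion.normSq_def', qi_re, qi_imI, qi_imJ, qi_imK] using h
    have hnJ : normSq J = 1 := by
      have h := hV qj qj; rw [← hJdef, inner_self, inner_self] at h
      simpa [Quaternion.normSq_def', qj_re, qj_imI, qj_imJ, qj_imK] using h
    have hnK : normSq K = 1 := by
      have h := hV qk qk; rw [← hKdef, inner_self, inner_self] at h
      simpa [Quaternion.normSq_def', qk_re, qk_imI, qk_imJ, qk_imK] using h
    have hIJ : (I * J).re = 0 := by
      have h := hV qi qj
      rw [← hIdef, ← hJdef, inner_def, inner_def, Quaternion.star_eq_neg.2 hJre, mul_neg, Quaternion.re_neg] at h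
      rw [show (qi * star qj).re = 0 by simp [qi_re, qi_imI, qi_imJ, qi_imK, qj_re, qj_imI, qj_imJ, qj_imK, Quaternion.re_mul]] at h
      linarith
    have hIK : (I * K).re = 0 := by
      have h := hV qi qk
      rw [← hIdef, ← hKdef, inner_def, inner_def, Quaternion.star_eq_neg.2 hKre, mul_neg, Quaternion.re_neg] at h
      rw [show (qi * star qk).re = 0 by simp [qi_re, qi_imI, qi_imJ, qi_imK, qk_re, qk_imI, qk_imJ, qk_imK, Quaternion.re_mul]] at h
      linarith
    have hJK : (J * K).re = 0 := by
      have h := hV qj qk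
      rw [← hJdef, ← hKdef, inner_def, inner_def, Quaternion.star_eq_neg.2 hKre, mul_neg, Quaternion.re_neg] at h
      rw [show (qj * star qk).re = 0 by simp [qj_re, qj_imI, qj_imJ, qj_imK, qk_re, qk_imI, qk_imJ, qk_imK, Quaternion.re_mul]] at h
      linarith
    have hKK := imag_sq hKre hnK
    have hIJsq : (I*J) * (I*J) = -1 := by
      refine imag_sq hIJ ?_
      rw [map_mul, hnI, hnJ, mul_one]
    have hKI : K * I = -(I*K) := imag_anticomm hKre hIre (by rw [re_mul_comm]; exact hIK)
    have hKJ : K * J = -(J*K) := imag_anticomm hKre hJre (by rw [re_mul_comm]; exact hJK)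
    have hcomm : K * (I*J) = (I*J) * K := by
      calc K * (I*J) = (K*I)*J := (mul_assoc _ _ _).symm
        _ = (-(I*K))*J := by rw [hKI]
        _ = -(I*(K*J)) := by rw [neg_mul, mul_assoc]
        _ = I*(J*K) := by rw [hKJ, mul_neg, neg_neg]
        _ = (I*J)*K := (mul_assoc _ _ _).symm
    have hsplit : (K - I*J) * (K + I*J) = 0 := by
      have expand : (K - I*J) * (K + I*J) = K*K + K*(I*J) - (I*J)*K - (I*J)*(I*J) := by
        noncomm_ring
      rw [expand, hKK, hIJsq, hcomm]
      abel
    have hSI : S qi = S 1 * I := (mul_inv_cancel_left₀ hp0 (S qi)).symm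
    have hSJ : S qj = S 1 * J := (mul_inv_cancel_left₀ hp0 (S qj)).symm
    have hSK : S qk = S 1 * K := (mul_inv_cancel_left₀ hp0 (S qk)).symm
    rcases mul_eq_zero.mp hsplit with h | h
    · -- K = I*J : orientation preserving
      have hK : K = I * J := sub_eq_zero.mp h
      obtain ⟨w, hw, hwi, hwj⟩ := key hIre hJre hnI hnJ hIJ
      have hwk : w * qk = K * w := by
        rw [hK, ← qij, ← mul_assoc, hwi, mul_assoc, hwj, ← mul_assoc]
      refine ⟨S 1 * w, w⁻¹, mul_ne_zero hp0 hw, inv_ne_zero hw, Or.inl ?_⟩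
      have e1 : (S 1 * w) * (1:ℍ) * w⁻¹ = S 1 := by
        rw [mul_one, mul_assoc, mul_inv_cancel₀ hw, mul_one]
      have e2 : (S 1 * w) * qi * w⁻¹ = S 1 * I := by
        rw [mul_assoc (S 1), hwi, ← mul_assoc, mul_assoc (S 1 * I), mul_inv_cancel₀ hw, mul_one]
      have e3 : (S 1 * w) * qj * w⁻¹ = S 1 * J := by
        rw [mul_assoc (S 1), hwj, ← mul_assoc, mul_assoc (S 1 * J), mul_inv_cancel₀ hw, mul_one]
      have e4 : (S 1 * w) * qk * w⁻¹ = S 1 * K := by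
        rw [mul_assoc (S 1), hwk, ← mul_assoc, mul_assoc (S 1 * K), mul_inv_cancel₀ hw, mul_one]
      apply LinearMap.ext; intro x
      conv_lhs => rw [qdecomp x]
      conv_rhs => rw [qdecomp x]
      simp only [map_add, map_smul, mulLR_apply]
      rw [e1, e2, e3, e4, hSI, hSJ, hSK]
    · -- K = -(I*J) : orientation reversing
      have hK : I * J = -K := by
        have := add_eq_zero_iff_eq_neg.mp h
        rw [this, neg_neg]
      obtain ⟨w, hw, hwi, hwj⟩ := key (I := -I) (J := -J) (by simp [hIre]) (by simp [hJre])
        (by rw [Quaternion.normSq_neg, hnI]) (by rw [Quaternion.normSq_neg, hnJ])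
        (by rw [neg_mul_neg]; exact hIJ)
      have hwk : w * qk = (-K) * w := by
        rw [← qij, ← mul_assoc, hwi, mul_assoc, hwj, ← mul_assoc, neg_mul_neg, hK]
      refine ⟨S 1 * w, w⁻¹, mul_ne_zero hp0 hw, inv_ne_zero hw, Or.inr ?_⟩
      have e1 : (S 1 * w) * (1:ℍ) * w⁻¹ = S 1 := by
        rw [mul_one, mul_assoc, mul_inv_cancel₀ hw, mul_one]
      have e2 : (S 1 * w) * qi * w⁻¹ = -(S 1 * I) := by
        rw [mul_assoc (S 1), hwi, neg_mul, mul_neg, neg_mul, ← mul_assoc,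
          mul_assoc (S 1 * I), mul_inv_cancel₀ hw, mul_one]
      have e3 : (S 1 * w) * qj * w⁻¹ = -(S 1 * J) := by
        rw [mul_assoc (S 1), hwj, neg_mul, mul_neg, neg_mul, ← mul_assoc,
          mul_assoc (S 1 * J), mul_inv_cancel₀ hw, mul_one]
      have e4 : (S 1 * w) * qk * w⁻¹ = -(S 1 * K) := by
        rw [mul_assoc (S 1), hwk, neg_mul, mul_neg, neg_mul, ← mul_assoc,
          mul_assoc (S 1 * K), mul_inv_cancel₀ hw, mul_one]
      apply LinearMap.ext; intro x
      conv_lhs => rw [qdecomp x]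
      conv_rhs => rw [qdecomp x]
      simp only [map_add, map_smul, LinearMap.comp_apply, conjL_apply, star_one, star_qi,
        star_qj, star_qk, map_neg, mulLR_apply]
      rw [e1, e2, e3, e4, hSI, hSJ, hSK]
      simp only [neg_neg]
  · intro p q hp hq
    have hnp := normSq_pos hp
    have hnq := normSq_pos hq
    have h4p : ‖p‖ ^ 4 * ‖q‖ ^ 4 = normSq q ^ 2 * normSq p ^ 2 := by
      rw [Quaternion.normSq_eq_norm_mul_self, Quaternion.normSq_eq_norm_mul_self]
      ring
    refine ⟨⟨normSq p * normSq q, mul_pos hnp hnq, fun u v => ?_⟩,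
      ⟨normSq p * normSq q, mul_pos hnp hnq, fun u v => ?_⟩, ?_, ?_⟩
    · rw [show (mulLR p q) u = p * u * q from rfl, show (mulLR p q) v = p * v * q from rfl,
        inner_rmul, inner_lmul]
      ring
    · rw [show ((mulLR p q).comp quatConjL) u = p * star u * q from rfl,
        show ((mulLR p q).comp quatConjL) v = p * star v * q from rfl,
        inner_rmul, inner_lmul, inner_star]
      ring
    · rw [show mulLR p q = (LinearMap.mulRight ℝ q).comp (LinearMap.mulLeft ℝ p) from rfl,
        LinearMap.det_comp, detL, detR, h4p]
    · rw [LinearMap.det_comp,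
        show mulLR p q = (LinearMap.mulRight ℝ q).comp (LinearMap.mulLeft ℝ p) from rfl,
        LinearMap.det_comp, detL, detR, detC, h4p]
      ring
end
end
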